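/- Let A1, A2 ∈ ℝ³ with |A1| ≤ ε and |A2| ≤ ε for some 0 < ε ≤ 1/2, and define R_A v = √(1−|A|²) v + A × v on ℝ³. Then the operator norm of R_{A1} − R_{A2} is at most 2·|A1 − A2|. -/

import Mathlib

noncomputable def cross (a b : EuclideanSpace ℝ (Fin 3)) : EuclideanSpace ℝ (Fin 3) :=
  (WithLp.equiv 2 (Fin 3 → ℝ)).symm
    ![a 1 * b 2 - a 2 * b 1, a 2 * b 0 - a 0 * b 2, a 0 * b 1 - a 1 * b 0]

/-- `R_A v = √(1−|A|²) v + A × v`. -/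
noncomputable def RA (A v : EuclideanSpace ℝ (Fin 3)) : EuclideanSpace ℝ (Fin 3) :=
  Real.sqrt (1 - ‖A‖ ^ 2) • v + cross A v

lemma cross_norm_le (a b : EuclideanSpace ℝ (Fin 3)) : ‖cross a b‖ ≤ ‖a‖ * ‖b‖ := by
  have hsq : ‖cross a b‖ ^ 2 ≤ (‖a‖ * ‖b‖) ^ 2 := by
    have h1 : ‖cross a b‖ ^ 2 = ∑ i, (cross a b i) ^ 2 := by
      rw [EuclideanSpace.norm_eq, Real.sq_sqrt (by positivity)]
      simp [sq_abs]
    have h2 : ‖a‖ ^ 2 = ∑ i, (a i) ^ 2 := by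
      rw [EuclideanSpace.norm_eq, Real.sq_sqrt (by positivity)]
      simp [sq_abs]
    have h3 : ‖b‖ ^ 2 = ∑ i, (b i) ^ 2 := by
      rw [EuclideanSpace.norm_eq, Real.sq_sqrt (by positivity)]
      simp [sq_abs]
    rw [mul_pow, h1, h2, h3, Fin.sum_univ_three, Fin.sum_univ_three, Fin.sum_univ_three]
    simp only [cross, WithLp.equiv_symm_apply, PiLp.toLp_apply, Matrix.cons_val_zero, Matrix.cons_val_one,
      Matrix.head_cons, Matrix.cons_val_two, Matrix.tail_cons]
    nlinarith [sq_nonneg (a 0 * b 0 + a 1 * b 1 + a 2 * b 2)]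
  have := Real.sqrt_le_sqrt hsq
  rwa [Real.sqrt_sq (norm_nonneg _), Real.sqrt_sq (by positivity)] at this

lemma cross_sub_left (a b v : EuclideanSpace ℝ (Fin 3)) :
    cross a v - cross b v = cross (a - b) v := by
  ext i
  fin_cases i <;>
    simp [cross, PiLp.sub_apply] <;> ring

/-- for `|A1|, |A2| ≤ ε ≤ 1/2`, the operator norm of `R_{A1} − R_{A2}`
is at most `2|A1 − A2|`. -/
theorem RA_diff_opNorm_le (ε : ℝ) (hε : 0 < ε) (hε' : ε ≤ 1 / 2)
    (A1 A2 : EuclideanSpace ℝ (Fin 3)) (hA1 : ‖A1‖ ≤ ε) (hA2 : ‖A2‖ ≤ ε) :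
    ∀ v : EuclideanSpace ℝ (Fin 3), ‖RA A1 v - RA A2 v‖ ≤ 2 * ‖A1 - A2‖ * ‖v‖ := by
  intro v
  set a := ‖A1‖ with ha
  set b := ‖A2‖ with hb
  have ha0 : 0 ≤ a := norm_nonneg _
  have hb0 : 0 ≤ b := norm_nonneg _
  have ha1 : a ≤ 1 / 2 := hA1.trans hε'
  have hb1 : b ≤ 1 / 2 := hA2.trans hε'
  set s := Real.sqrt (1 - a ^ 2) with hs
  set t := Real.sqrt (1 - b ^ 2) with ht
  have hs0 : 0 ≤ s := Real.sqrt_nonneg _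
  have ht0 : 0 ≤ t := Real.sqrt_nonneg _
  have hs2 : s ^ 2 = 1 - a ^ 2 := Real.sq_sqrt (by nlinarith)
  have ht2 : t ^ 2 = 1 - b ^ 2 := Real.sq_sqrt (by nlinarith)
  have hsl : 1 / 2 ≤ s := by nlinarith
  have htl : 1 / 2 ≤ t := by nlinarith
  have hst : |s - t| ≤ |a - b| := by
    have h1 : (s - t) * (s + t) = (b - a) * (b + a) := by linear_combination hs2 - ht2
    have h2 : (s - t) ^ 2 * (s + t) ^ 2 = (a - b) ^ 2 * (a + b) ^ 2 := by
      linear_combination ((s - t) * (s + t) + (b - a) * (b + a)) * h1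
    have hsum : a + b ≤ s + t := by linarith
    have hq : (a + b) ^ 2 ≤ (s + t) ^ 2 := by
      exact pow_le_pow_left₀ (by linarith) hsum 2
    have hpos : (0:ℝ) < (s + t) ^ 2 := by positivity
    have : (s - t) ^ 2 ≤ (a - b) ^ 2 := by
      rw [← mul_le_mul_iff_left₀ hpos, h2]
      exact mul_le_mul_of_nonneg_left hq (sq_nonneg _)
    have := Real.sqrt_le_sqrt this
    rwa [Real.sqrt_sq_eq_abs, Real.sqrt_sq_eq_abs] at this
  have habs : |a - b| ≤ ‖A1 - A2‖ := abs_norm_sub_norm_le A1 A2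
  have key : RA A1 v - RA A2 v = (s - t) • v + cross (A1 - A2) v := by
    rw [RA, RA, sub_smul, ← cross_sub_left]
    abel
  rw [key]
  calc ‖(s - t) • v + cross (A1 - A2) v‖
      ≤ ‖(s - t) • v‖ + ‖cross (A1 - A2) v‖ := norm_add_le _ _
    _ ≤ |s - t| * ‖v‖ + ‖A1 - A2‖ * ‖v‖ := by
        rw [norm_smul, Real.norm_eq_abs]
        exact add_le_add le_rfl (cross_norm_le _ _)
    _ ≤ ‖A1 - A2‖ * ‖v‖ + ‖A1 - A2‖ * ‖v‖ := by
        gcongr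
        exact hst.trans habs
    _ = 2 * ‖A1 - A2‖ * ‖v‖ := by ring
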